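/- Fix m ≥ 1 and 1 ≤ k ≤ m, and let β₁ := (β_k^{HF})_{(1|1|0)} and β₂ := (β_k^{HF})_{(0|1|1)} be as defined. Then β₁ and β₂ are filtered: β₁(ℱ_a(B^{HF}_m) ⊗ ℱ_b(P_k^{HF} ⊗ _kP^{HF})) ⊆ ℱ_{a+b}(B^{HF}_m) and β₂(ℱ_a(P_k^{HF} ⊗ _kP^{HF}) ⊗ ℱ_b(B^{HF}_m)) ⊆ ℱ_{a+b}(B^{HF}_m) for all a, b (where ℱ_n(B^{HF}_m) = B^{HF}_m for n ≥ 1). Moreover, the induced maps on associated graded pieces coincide with the maps (β_k^{Kh})_{(1|1|0)} and (β_k^{Kh})_{(0|1|1)} over B^{Kh}_m, under the identifications gr(B^{HF}_m) ≅ B^{Kh}_m (sending 1_{ii}, 1_{ij} to 1_{ii}, 1_{ij} and [ρ_{ij}] to x_{ij}) and the grading of P_k^{Kh} ⊗ _kP^{Kh} placing v*⊗u in degree 0, v*⊗v and u*⊗u in degree 1, and u*⊗v in degree 2 (identified with the corresponding classes in ℱ_0, ℱ_1/ℱ_0 and ℱ_2/ℱ_1 of P_k^{HF} ⊗ _kP^{HF}).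 -/

import Mathlib

set_option maxHeartbeats 1000000

open Matrix

noncomputable section

namespace Stmt16
abbrev 𝔽 : Type := ZMod 2

/-- `𝔽[X]/(X²)`, modeled as the dual numbers over `𝔽 = ℤ/2ℤ`. -/
abbrev D : Type := DualNumber 𝔽

/-- The element `x + y·X` of `𝔽[X]/(X²)`. -/
def dn (x y : 𝔽) : D := TrivSqZeroExt.inl x + TrivSqZeroExt.inr y

abbrev MKh (m : ℕ) : Type := Matrix (Fin (m + 1)) (Fin (m + 1)) D
abbrev MHF (m : ℕ) : Type := Matrix (Fin (m + 1)) (Fin (m + 1)) (𝔽 × 𝔽)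

/-- `B^{Kh}_m`: lower triangular `(m+1)×(m+1)` matrices over `𝔽[X]/(X²)` whose
diagonal entries lie in `{0,1}`. -/
def BKh (m : ℕ) : Set (MKh m) :=
  {M | (∀ i j, i < j → M i j = 0) ∧ (∀ i, M i i = 0 ∨ M i i = 1)}

/-- `B^{HF}_m`: lower triangular `(m+1)×(m+1)` matrices over `𝔽 × 𝔽` whose
diagonal entries lie in `{(0,0),(1,1)}`. -/
def BHF (m : ℕ) : Set (MHF m) :=
  {M | (∀ i j, i < j → M i j = 0) ∧ (∀ i, M i i = 0 ∨ M i i = 1)}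

/-- The index `k` as an element of `Fin (m+1)`. -/
def idx (m k : ℕ) : Fin (m + 1) := Fin.ofNat (m + 1) k

/-- The left action of `B^{Kh}_m` on `P_k^{Kh}`; an element `α·u* + β·v*` is
recorded by its coordinates `(α, β)` in the basis `u*, v*`.  This is the unique
bilinear extension of the action table `1_{kk}·u* = u*`, `1_{k-1,k-1}·v* = v*`,
`x_{k,k-1}·v* = u*`, all other actions of pairs of basis elements being `0`. -/
def lActKh (m k : ℕ) (b : MKh m) (p : 𝔽 × 𝔽) : 𝔽 × 𝔽 :=
  ((b (idx m k) (idx m k)).fst * p.1 + (b (idx m k) (idx m (k - 1))).snd * p.2,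
   (b (idx m (k - 1)) (idx m (k - 1))).fst * p.2)

/-- The right action of `B^{Kh}_m` on `_kP^{Kh}`; an element `γ·u + δ·v` is
recorded by its coordinates `(γ, δ)` in the basis `u, v`.  This is the unique
bilinear extension of the action table `u·1_{kk} = u`, `u·x_{k,k-1} = v`,
`v·1_{k-1,k-1} = v`, all other actions of pairs of basis elements being `0`. -/
def rActKh (m k : ℕ) (q : 𝔽 × 𝔽) (a : MKh m) : 𝔽 × 𝔽 :=
  (q.1 * (a (idx m k) (idx m k)).fst,
   q.1 * (a (idx m k) (idx m (k - 1))).snd + q.2 * (a (idx m (k - 1)) (idx m (k - 1))).fst)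

/-- The left action of `B^{HF}_m` on `P_k^{HF}` (coordinates in the basis `u*, v*`):
the bilinear extension of `1_{kk}·u* = u*`, `1_{k-1,k-1}·v* = v*`,
`ρ_{k,k-1}·v* = σ_{k,k-1}·v* = u*`, all other actions of basis elements being `0`. -/
def lActHF (m k : ℕ) (b : MHF m) (p : 𝔽 × 𝔽) : 𝔽 × 𝔽 :=
  ((b (idx m k) (idx m k)).1 * p.1
      + ((b (idx m k) (idx m (k - 1))).1 + (b (idx m k) (idx m (k - 1))).2) * p.2,
   (b (idx m (k - 1)) (idx m (k - 1))).1 * p.2)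

/-- The right action of `B^{HF}_m` on `_kP^{HF}` (coordinates in the basis `u, v`):
the bilinear extension of `u·1_{kk} = u`, `u·ρ_{k,k-1} = u·σ_{k,k-1} = v`,
`v·1_{k-1,k-1} = v`, all other actions of basis elements being `0`. -/
def rActHF (m k : ℕ) (q : 𝔽 × 𝔽) (a : MHF m) : 𝔽 × 𝔽 :=
  (q.1 * (a (idx m k) (idx m k)).1,
   q.1 * ((a (idx m k) (idx m (k - 1))).1 + (a (idx m k) (idx m (k - 1))).2)
      + q.2 * (a (idx m (k - 1)) (idx m (k - 1))).1)

/-- The tensor product `P_k ⊗ _kP`: coordinates `(w₁, w₂, w₃, w₄)` in the basis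
`u*⊗u, u*⊗v, v*⊗u, v*⊗v`. -/
abbrev T4 : Type := 𝔽 × 𝔽 × 𝔽 × 𝔽

/-- Left action of `B^{Kh}_m` on `P_k^{Kh} ⊗ _kP^{Kh}`, via `b·(p⊗q) = (b·p)⊗q`. -/
def lActKhT (m k : ℕ) (b : MKh m) (w : T4) : T4 :=
  ((b (idx m k) (idx m k)).fst * w.1 + (b (idx m k) (idx m (k - 1))).snd * w.2.2.1,
   (b (idx m k) (idx m k)).fst * w.2.1 + (b (idx m k) (idx m (k - 1))).snd * w.2.2.2,
   (b (idx m (k - 1)) (idx m (k - 1))).fst * w.2.2.1,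
   (b (idx m (k - 1)) (idx m (k - 1))).fst * w.2.2.2)

/-- Right action of `B^{Kh}_m` on `P_k^{Kh} ⊗ _kP^{Kh}`, via `(p⊗q)·b = p⊗(q·b)`. -/
def rActKhT (m k : ℕ) (w : T4) (a : MKh m) : T4 :=
  (w.1 * (a (idx m k) (idx m k)).fst,
   w.1 * (a (idx m k) (idx m (k - 1))).snd + w.2.1 * (a (idx m (k - 1)) (idx m (k - 1))).fst,
   w.2.2.1 * (a (idx m k) (idx m k)).fst,
   w.2.2.1 * (a (idx m k) (idx m (k - 1))).snd + w.2.2.2 * (a (idx m (k - 1)) (idx m (k - 1))).fst)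

/-- Left action of `B^{HF}_m` on `P_k^{HF} ⊗ _kP^{HF}`. -/
def lActHFT (m k : ℕ) (b : MHF m) (w : T4) : T4 :=
  ((b (idx m k) (idx m k)).1 * w.1
      + ((b (idx m k) (idx m (k - 1))).1 + (b (idx m k) (idx m (k - 1))).2) * w.2.2.1,
   (b (idx m k) (idx m k)).1 * w.2.1
      + ((b (idx m k) (idx m (k - 1))).1 + (b (idx m k) (idx m (k - 1))).2) * w.2.2.2,
   (b (idx m (k - 1)) (idx m (k - 1))).1 * w.2.2.1,
   (b (idx m (k - 1)) (idx m (k - 1))).1 * w.2.2.2)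

/-- Right action of `B^{HF}_m` on `P_k^{HF} ⊗ _kP^{HF}`. -/
def rActHFT (m k : ℕ) (w : T4) (a : MHF m) : T4 :=
  (w.1 * (a (idx m k) (idx m k)).1,
   w.1 * ((a (idx m k) (idx m (k - 1))).1 + (a (idx m k) (idx m (k - 1))).2)
      + w.2.1 * (a (idx m (k - 1)) (idx m (k - 1))).1,
   w.2.2.1 * (a (idx m k) (idx m k)).1,
   w.2.2.1 * ((a (idx m k) (idx m (k - 1))).1 + (a (idx m k) (idx m (k - 1))).2)
      + w.2.2.2 * (a (idx m (k - 1)) (idx m (k - 1))).1)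

/-- `γ_k^{Kh} : B^{Kh}_m → P_k^{Kh} ⊗ _kP^{Kh}`, `b ↦ b·(u*⊗u + v*⊗v)`. -/
def γKh (m k : ℕ) (b : MKh m) : T4 := lActKhT m k b (1, 0, 0, 1)

/-- `γ_k^{HF} : B^{HF}_m → P_k^{HF} ⊗ _kP^{HF}`, `b ↦ b·(u*⊗u + v*⊗v)`. -/
def γHF (m k : ℕ) (b : MHF m) : T4 := lActHFT m k b (1, 0, 0, 1)

/-- `(β_k^{Kh})_{(1|1|0)} : B^{Kh}_m ⊗ (P_k^{Kh} ⊗ _kP^{Kh}) → B^{Kh}_m`: the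
bilinear map given on pairs of basis elements by `(1_{ik}, u*⊗u) ↦ x_{ik}` (`i ≥ k+1`),
`(1_{i,k-1}, v*⊗u) ↦ 1_{ik}` (`i ≥ k`), `(x_{i,k-1}, v*⊗u) ↦ x_{ik}` (`i ≥ k+1`),
`(1_{i,k-1}, v*⊗v) ↦ x_{i,k-1}` (`i ≥ k`), all other values being `0`. -/
def βKh1 (m k : ℕ) (b : MKh m) (w : T4) : MKh m :=
  (∑ i : Fin (m + 1), if k < (i : ℕ) then
      single i (idx m k)
        (dn ((b i (idx m (k - 1))).fst * w.2.2.1)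
            ((b i (idx m k)).fst * w.1 + (b i (idx m (k - 1))).snd * w.2.2.1)) else 0)
  + single (idx m k) (idx m k) (dn ((b (idx m k) (idx m (k - 1))).fst * w.2.2.1) 0)
  + ∑ i : Fin (m + 1), if k ≤ (i : ℕ) then
      single i (idx m (k - 1)) (dn 0 ((b i (idx m (k - 1))).fst * w.2.2.2)) else 0

/-- `(β_k^{Kh})_{(0|1|1)} : (P_k^{Kh} ⊗ _kP^{Kh}) ⊗ B^{Kh}_m → B^{Kh}_m`: the
bilinear map given on pairs of basis elements by `(u*⊗u, 1_{kj}) ↦ x_{kj}` (`j ≤ k-1`),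
`(v*⊗u, 1_{kj}) ↦ 1_{k-1,j}` (`j ≤ k-1`), `(v*⊗u, x_{kj}) ↦ x_{k-1,j}` (`j ≤ k-2`),
`(v*⊗v, 1_{k-1,j}) ↦ x_{k-1,j}` (`j ≤ k-2`), all other values being `0`. -/
def βKh2 (m k : ℕ) (w : T4) (a : MKh m) : MKh m :=
  (∑ j : Fin (m + 1), if (j : ℕ) < k then
      single (idx m k) j (dn 0 (w.1 * (a (idx m k) j).fst)) else 0)
  + (∑ j : Fin (m + 1), if (j : ℕ) < k then
      single (idx m (k - 1)) j (dn (w.2.2.1 * (a (idx m k) j).fst) 0) else 0)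
  + ∑ j : Fin (m + 1), if (j : ℕ) < k - 1 then
      single (idx m (k - 1)) j
        (dn 0 (w.2.2.1 * (a (idx m k) j).snd + w.2.2.2 * (a (idx m (k - 1)) j).fst)) else 0

/-- `(β_k^{HF})_{(1|1|0)} : B^{HF}_m ⊗ (P_k^{HF} ⊗ _kP^{HF}) → B^{HF}_m`: the
bilinear map given on pairs of basis elements by `(ρ_{ik}, u*⊗u) ↦ ρ_{ik}` (`i ≥ k+1`),
`(σ_{k,k-1}, v*⊗u) ↦ 1_{kk}`, `(ρ_{i,k-1}, v*⊗u) ↦ ρ_{ik}` (`i ≥ k+1`),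
`(σ_{i,k-1}, v*⊗u) ↦ σ_{ik}` (`i ≥ k+1`), `(ρ_{i,k-1}, v*⊗v) ↦ ρ_{i,k-1}` (`i ≥ k`),
all other values being `0`. -/
def βHF1 (m k : ℕ) (b : MHF m) (w : T4) : MHF m :=
  (∑ i : Fin (m + 1), if k < (i : ℕ) then
      single i (idx m k)
        ((b i (idx m k)).1 * w.1 + (b i (idx m (k - 1))).1 * w.2.2.1,
         (b i (idx m (k - 1))).2 * w.2.2.1) else 0)
  + single (idx m k) (idx m k)
      ((b (idx m k) (idx m (k - 1))).2 * w.2.2.1, (b (idx m k) (idx m (k - 1))).2 * w.2.2.1)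
  + ∑ i : Fin (m + 1), if k ≤ (i : ℕ) then
      single i (idx m (k - 1)) ((b i (idx m (k - 1))).1 * w.2.2.2, 0) else 0

/-- `(β_k^{HF})_{(0|1|1)} : (P_k^{HF} ⊗ _kP^{HF}) ⊗ B^{HF}_m → B^{HF}_m`: the
bilinear map given on pairs of basis elements by `(u*⊗u, ρ_{kj}) ↦ ρ_{kj}` (`j ≤ k-1`),
`(v*⊗u, σ_{k,k-1}) ↦ 1_{k-1,k-1}`, `(v*⊗u, ρ_{kj}) ↦ ρ_{k-1,j}` (`j ≤ k-2`),
`(v*⊗u, σ_{kj}) ↦ σ_{k-1,j}` (`j ≤ k-2`), `(v*⊗v, ρ_{k-1,j}) ↦ ρ_{k-1,j}` (`j ≤ k-2`),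
all other values being `0`. -/
def βHF2 (m k : ℕ) (w : T4) (a : MHF m) : MHF m :=
  (∑ j : Fin (m + 1), if (j : ℕ) < k then
      single (idx m k) j (w.1 * (a (idx m k) j).1, 0) else 0)
  + single (idx m (k - 1)) (idx m (k - 1))
      (w.2.2.1 * (a (idx m k) (idx m (k - 1))).2, w.2.2.1 * (a (idx m k) (idx m (k - 1))).2)
  + ∑ j : Fin (m + 1), if (j : ℕ) < k - 1 then
      single (idx m (k - 1)) j
        (w.2.2.1 * (a (idx m k) j).1 + w.2.2.2 * (a (idx m (k - 1)) j).1,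
         w.2.2.1 * (a (idx m k) j).2) else 0

/-- The left action on the mapping cone `(P_k^{Kh} ⊗ _kP^{Kh}) ⊕ B^{Kh}_m`,
`a·(w, b) := (a·w, β₁(a,w) + a·b)`. -/
def coneLKh (m k : ℕ) (a : MKh m) (p : T4 × MKh m) : T4 × MKh m :=
  (lActKhT m k a p.1, βKh1 m k a p.1 + a * p.2)

/-- The right action on the mapping cone, `(w, b)·a := (w·a, β₂(w,a) + b·a)`. -/
def coneRKh (m k : ℕ) (p : T4 × MKh m) (a : MKh m) : T4 × MKh m :=
  (rActKhT m k p.1 a, βKh2 m k p.1 a + p.2 * a)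

def coneLHF (m k : ℕ) (a : MHF m) (p : T4 × MHF m) : T4 × MHF m :=
  (lActHFT m k a p.1, βHF1 m k a p.1 + a * p.2)

def coneRHF (m k : ℕ) (p : T4 × MHF m) (a : MHF m) : T4 × MHF m :=
  (rActHFT m k p.1 a, βHF2 m k p.1 a + p.2 * a)

/-- The degree-0 identification `ℱ₀(B^{HF}_m) ≅ (degree-0 part of B^{Kh}_m)`,
sending `1_{ii}, 1_{ij} = ρ_{ij} + σ_{ij}` to `1_{ii}, 1_{ij}`: on matrix entries,
`(c, c) ↦ c`. -/
def σ0 (m : ℕ) (M : MHF m) : MKh m := Matrix.of fun i j => dn ((M i j).1) 0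

/-- The degree-1 identification `ℱ₁/ℱ₀(B^{HF}_m) ≅ (degree-1 part of B^{Kh}_m)`,
sending the class `[ρ_{ij}]` to `x_{ij}`: on matrix entries, `(r, s) ↦ (r+s)·X`
(which kills `ℱ₀` and sends `ρ_{ij}`, and any representative of `[ρ_{ij}]`, to `x_{ij}`). -/
def σ1 (m : ℕ) (M : MHF m) : MKh m := Matrix.of fun i j => dn 0 ((M i j).1 + (M i j).2)

/-- `ℱ₀(B^{HF}_m)`: the 𝔽-span of the `1_{ii}` and the `1_{ij} = ρ_{ij} + σ_{ij}`,
i.e. lower triangular matrices all of whose entries lie in `𝔽·(1,1)`. -/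
def F0HF (m : ℕ) : Set (MHF m) :=
  {M | (∀ i j, i < j → M i j = 0) ∧ ∀ i j, (M i j).1 = (M i j).2}

/-- The filtration `ℱ_{-1} = 0 ⊆ ℱ₀ ⊆ ℱ₁ = B^{HF}_m` (with `ℱ_n = B^{HF}_m` for
`n ≥ 1` and `ℱ_n = 0` for `n ≤ -1`). -/
def FiltB (m : ℕ) : ℤ → Set (MHF m) := fun n =>
  if n < 0 then {0} else if n = 0 then F0HF m else BHF m

/-- The filtration on `P_k^{HF} ⊗ _kP^{HF}`:
`ℱ₀ = 𝔽·(v*⊗u) ⊆ ℱ₁ = span{v*⊗u, v*⊗v, u*⊗u} ⊆ ℱ₂ = everything`. -/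
def FiltT : ℤ → Set T4 := fun n =>
  if n < 0 then {0}
  else if n = 0 then {w | w.1 = 0 ∧ w.2.1 = 0 ∧ w.2.2.2 = 0}
  else if n = 1 then {w | w.2.1 = 0}
  else Set.univ

/-- The identification of `ℱ₁/ℱ₀(P_k^{HF} ⊗ _kP^{HF})` with the degree-1 part
`span{u*⊗u, v*⊗v}` of `P_k^{Kh} ⊗ _kP^{Kh}`: the class of `w` is recorded by its
`u*⊗u` and `v*⊗v` coordinates. -/
def θ1 (w : T4) : T4 := (w.1, 0, 0, w.2.2.2)


section Helpers

lemma val_idx {m k : ℕ} (h : k ≤ m) : ((idx m k : Fin (m+1)) : ℕ) = k :=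
  by rw [idx, Fin.val_ofNat]; exact Nat.mod_eq_of_lt (by omega)

@[simp] lemma dn_fst (x y : 𝔽) : (dn x y).fst = x := by simp [dn]
@[simp] lemma dn_snd (x y : 𝔽) : (dn x y).snd = y := by simp [dn]

lemma dn_inj {a b c d : 𝔽} : dn a b = dn c d ↔ a = c ∧ b = d := by
  constructor
  · intro h
    constructor
    · have := congrArg TrivSqZeroExt.fst h; simpa using this
    · have := congrArg TrivSqZeroExt.snd h; simpa using this
  · rintro ⟨rfl, rfl⟩; rfl

@[simp] lemma dn_zero : dn 0 0 = 0 := by simp [dn]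

lemma dn_add (a b c d : 𝔽) : dn a b + dn c d = dn (a + c) (b + d) := by
  apply TrivSqZeroExt.ext <;> simp [TrivSqZeroExt.fst_add, TrivSqZeroExt.snd_add]

lemma idx_val {m : ℕ} (j : Fin (m+1)) : idx m (j : ℕ) = j := Fin.ext (by rw [idx, Fin.val_ofNat]; exact Nat.mod_eq_of_lt j.isLt)

lemma char2_cancel (a b : 𝔽) : a + (a + b) = b := by
  rw [← add_assoc, CharTwo.add_self_eq_zero, zero_add]

lemma sum_ite_std {n : ℕ} {α : Type*} [AddCommMonoid α] (P : Fin n → Prop) [DecidablePred P]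
    (c : Fin n) (v : Fin n → α) (i j : Fin n) :
    (∑ i' : Fin n, if P i' then Matrix.single i' c (v i') else 0) i j
      = if P i ∧ c = j then v i else 0 := by
  rw [Matrix.sum_apply]
  rw [Finset.sum_eq_single i]
  · by_cases h : P i
    · simp [h, single, of_apply]
    · simp [h]
  · intro b _ hb
    by_cases h : P b
    · simp [h, single, of_apply, hb]
    · simp [h]
  · simp


lemma sum_ite_std' {n : ℕ} {α : Type*} [AddCommMonoid α] (P : Fin n → Prop) [DecidablePred P]
    (c : Fin n) (v : Fin n → α) (i j : Fin n) :
    (∑ j' : Fin n, if P j' then Matrix.single c j' (v j') else 0) i j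
      = if P j ∧ c = i then v j else 0 := by
  rw [Matrix.sum_apply]
  rw [Finset.sum_eq_single j]
  · by_cases h : P j
    · simp [h, single, of_apply, and_comm]
    · simp [h]
  · intro b _ hb
    by_cases h : P b
    · simp [h, single, of_apply, hb]
    · simp [h]
  · simp

variable {m k : ℕ}

lemma βHF1_apply (hk1 : 1 ≤ k) (hk2 : k ≤ m) (b : MHF m) (w : T4) (i j : Fin (m+1)) :
    βHF1 m k b w i j =
      (if k < (i : ℕ) ∧ k = (j : ℕ) then
        ((b i (idx m k)).1 * w.1 + (b i (idx m (k-1))).1 * w.2.2.1,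
         (b i (idx m (k-1))).2 * w.2.2.1) else 0)
      + (if k = (i : ℕ) ∧ k = (j : ℕ) then
        ((b (idx m k) (idx m (k-1))).2 * w.2.2.1,
         (b (idx m k) (idx m (k-1))).2 * w.2.2.1) else 0)
      + (if k ≤ (i : ℕ) ∧ k - 1 = (j : ℕ) then
        ((b i (idx m (k-1))).1 * w.2.2.2, 0) else 0) := by
  have h1 : ((idx m k : Fin (m+1)) : ℕ) = k := val_idx hk2
  have h2 : ((idx m (k-1) : Fin (m+1)) : ℕ) = k - 1 := val_idx (by omega)
  simp only [βHF1, Matrix.add_apply, sum_ite_std]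
  simp only [Matrix.single, Matrix.of_apply, Fin.ext_iff, h1, h2]

lemma βKh1_apply (hk1 : 1 ≤ k) (hk2 : k ≤ m) (b : MKh m) (w : T4) (i j : Fin (m+1)) :
    βKh1 m k b w i j =
      (if k < (i : ℕ) ∧ k = (j : ℕ) then
        dn ((b i (idx m (k-1))).fst * w.2.2.1)
           ((b i (idx m k)).fst * w.1 + (b i (idx m (k-1))).snd * w.2.2.1) else 0)
      + (if k = (i : ℕ) ∧ k = (j : ℕ) then
        dn ((b (idx m k) (idx m (k-1))).fst * w.2.2.1) 0 else 0)
      + (if k ≤ (i : ℕ) ∧ k - 1 = (j : ℕ) then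
        dn 0 ((b i (idx m (k-1))).fst * w.2.2.2) else 0) := by
  have h1 : ((idx m k : Fin (m+1)) : ℕ) = k := val_idx hk2
  have h2 : ((idx m (k-1) : Fin (m+1)) : ℕ) = k - 1 := val_idx (by omega)
  simp only [βKh1, Matrix.add_apply, sum_ite_std]
  simp only [Matrix.single, Matrix.of_apply, Fin.ext_iff, h1, h2]

lemma βHF2_apply (hk1 : 1 ≤ k) (hk2 : k ≤ m) (w : T4) (a : MHF m) (i j : Fin (m+1)) :
    βHF2 m k w a i j =
      (if k = (i : ℕ) ∧ (j : ℕ) < k then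
        (w.1 * (a (idx m k) j).1, 0) else 0)
      + (if k - 1 = (i : ℕ) ∧ k - 1 = (j : ℕ) then
        (w.2.2.1 * (a (idx m k) (idx m (k-1))).2,
         w.2.2.1 * (a (idx m k) (idx m (k-1))).2) else 0)
      + (if k - 1 = (i : ℕ) ∧ (j : ℕ) < k - 1 then
        (w.2.2.1 * (a (idx m k) j).1 + w.2.2.2 * (a (idx m (k-1)) j).1,
         w.2.2.1 * (a (idx m k) j).2) else 0) := by
  have h1 : ((idx m k : Fin (m+1)) : ℕ) = k := val_idx hk2
  have h2 : ((idx m (k-1) : Fin (m+1)) : ℕ) = k - 1 := val_idx (by omega)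
  simp only [βHF2, Matrix.add_apply, sum_ite_std']
  simp only [Matrix.single, Matrix.of_apply, Fin.ext_iff, h1, h2, and_comm]

lemma βKh2_apply (hk1 : 1 ≤ k) (hk2 : k ≤ m) (w : T4) (a : MKh m) (i j : Fin (m+1)) :
    βKh2 m k w a i j =
      (if k = (i : ℕ) ∧ (j : ℕ) < k then
        dn 0 (w.1 * (a (idx m k) j).fst) else 0)
      + (if k - 1 = (i : ℕ) ∧ (j : ℕ) < k then
        dn (w.2.2.1 * (a (idx m k) j).fst) 0 else 0)
      + (if k - 1 = (i : ℕ) ∧ (j : ℕ) < k - 1 then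
        dn 0 (w.2.2.1 * (a (idx m k) j).snd + w.2.2.2 * (a (idx m (k-1)) j).fst) else 0) := by
  have h1 : ((idx m k : Fin (m+1)) : ℕ) = k := val_idx hk2
  have h2 : ((idx m (k-1) : Fin (m+1)) : ℕ) = k - 1 := val_idx (by omega)
  simp only [βKh2, Matrix.add_apply, sum_ite_std']
  simp only [Matrix.single, Matrix.of_apply, Fin.ext_iff, h1, h2, and_comm]

lemma pair_diag_01 : ∀ c : 𝔽, ((c, c) : 𝔽 × 𝔽) = 0 ∨ ((c, c) : 𝔽 × 𝔽) = 1 := by decide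

lemma zero_mem_FiltB (m : ℕ) (n : ℤ) : (0 : MHF m) ∈ FiltB m n := by
  simp only [FiltB]
  split_ifs
  · rfl
  · exact ⟨fun i j _ => rfl, fun i j => rfl⟩
  · exact ⟨fun i j _ => rfl, fun i => Or.inl rfl⟩

lemma βHF1_zero_left (hk1 : 1 ≤ k) (hk2 : k ≤ m) (w : T4) : βHF1 m k 0 w = 0 := by
  apply Matrix.ext
  intro i j
  rw [βHF1_apply hk1 hk2]
  simp [Prod.ext_iff, Prod.mk_zero_zero]

lemma βHF1_zero_right (hk1 : 1 ≤ k) (hk2 : k ≤ m) (b : MHF m) : βHF1 m k b 0 = 0 := by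
  apply Matrix.ext
  intro i j
  rw [βHF1_apply hk1 hk2]
  simp [Prod.ext_iff, Prod.mk_zero_zero]

lemma βHF2_zero_left (hk1 : 1 ≤ k) (hk2 : k ≤ m) (a : MHF m) : βHF2 m k 0 a = 0 := by
  apply Matrix.ext
  intro i j
  rw [βHF2_apply hk1 hk2]
  simp [Prod.ext_iff, Prod.mk_zero_zero]

lemma βHF2_zero_right (hk1 : 1 ≤ k) (hk2 : k ≤ m) (w : T4) : βHF2 m k w 0 = 0 := by
  apply Matrix.ext
  intro i j
  rw [βHF2_apply hk1 hk2]
  simp [Prod.ext_iff, Prod.mk_zero_zero]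

lemma mem_BHF_β1 (hk1 : 1 ≤ k) (hk2 : k ≤ m) (b : MHF m) (w : T4) :
    βHF1 m k b w ∈ BHF m := by
  constructor
  · intro i j hij
    have hij' : (i : ℕ) < (j : ℕ) := hij
    rw [βHF1_apply hk1 hk2, if_neg (by omega), if_neg (by omega), if_neg (by omega)]
    simp
  · intro i
    rw [βHF1_apply hk1 hk2,
      if_neg (show ¬(k < (i : ℕ) ∧ k = (i : ℕ)) by omega),
      if_neg (show ¬(k ≤ (i : ℕ) ∧ k - 1 = (i : ℕ)) by omega)]
    by_cases h : k = (i : ℕ)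
    · rw [if_pos ⟨h, h⟩]
      rw [zero_add, add_zero]
      exact pair_diag_01 _
    · rw [if_neg fun hc => h hc.1]
      simp

lemma mem_BHF_β2 (hk1 : 1 ≤ k) (hk2 : k ≤ m) (w : T4) (a : MHF m) :
    βHF2 m k w a ∈ BHF m := by
  constructor
  · intro i j hij
    have hij' : (i : ℕ) < (j : ℕ) := hij
    rw [βHF2_apply hk1 hk2, if_neg (by omega), if_neg (by omega), if_neg (by omega)]
    simp
  · intro i
    rw [βHF2_apply hk1 hk2,
      if_neg (show ¬(k = (i : ℕ) ∧ (i : ℕ) < k) by omega),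
      if_neg (show ¬(k - 1 = (i : ℕ) ∧ (i : ℕ) < k - 1) by omega)]
    by_cases h : k - 1 = (i : ℕ)
    · rw [if_pos ⟨h, h⟩]
      rw [zero_add, add_zero]
      exact pair_diag_01 _
    · rw [if_neg fun hc => h hc.1]
      simp

lemma mem_F0_β1 (hk1 : 1 ≤ k) (hk2 : k ≤ m) (b : MHF m) (w : T4)
    (hb : ∀ i j, (b i j).1 = (b i j).2) (h1 : w.1 = 0) (h4 : w.2.2.2 = 0) :
    βHF1 m k b w ∈ F0HF m := by
  constructor
  · intro i j hij
    have hij' : (i : ℕ) < (j : ℕ) := hij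
    rw [βHF1_apply hk1 hk2, if_neg (by omega), if_neg (by omega), if_neg (by omega)]
    simp
  · intro i j
    rw [βHF1_apply hk1 hk2]
    split_ifs <;> simp_all

lemma mem_F0_β2 (hk1 : 1 ≤ k) (hk2 : k ≤ m) (w : T4) (a : MHF m)
    (ha : ∀ i j, (a i j).1 = (a i j).2) (h1 : w.1 = 0) (h4 : w.2.2.2 = 0) :
    βHF2 m k w a ∈ F0HF m := by
  constructor
  · intro i j hij
    have hij' : (i : ℕ) < (j : ℕ) := hij
    rw [βHF2_apply hk1 hk2, if_neg (by omega), if_neg (by omega), if_neg (by omega)]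
    simp
  · intro i j
    rw [βHF2_apply hk1 hk2]
    split_ifs <;> simp_all

lemma grade1_00 (hk1 : 1 ≤ k) (hk2 : k ≤ m) (x : MHF m) (w : T4)
    (hx : ∀ i j, (x i j).1 = (x i j).2) (h1 : w.1 = 0) (h4 : w.2.2.2 = 0) :
    σ0 m (βHF1 m k x w) = βKh1 m k (σ0 m x) w := by
  apply Matrix.ext
  intro i j
  simp only [σ0, Matrix.of_apply]
  rw [βHF1_apply hk1 hk2, βKh1_apply hk1 hk2]
  simp only [σ0, Matrix.of_apply, dn_fst, dn_snd]
  split_ifs <;>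
    first
    | (exfalso; omega)
    | simp_all [dn_inj, dn_add, Prod.fst_add, Prod.snd_add, CharTwo.add_self_eq_zero,
        char2_cancel, Fin.cast_val_eq_self, idx_val,
        mul_add, add_mul, add_assoc, add_comm, add_left_comm, mul_comm, mul_left_comm]
    | (exfalso; simp_all; omega)

lemma grade1_10 (hk1 : 1 ≤ k) (hk2 : k ≤ m) (x : MHF m) (w : T4)
    (h1 : w.1 = 0) (h4 : w.2.2.2 = 0) :
    σ1 m (βHF1 m k x w) = βKh1 m k (σ1 m x) w := by
  apply Matrix.ext
  intro i j
  simp only [σ1, Matrix.of_apply]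
  rw [βHF1_apply hk1 hk2, βKh1_apply hk1 hk2]
  simp only [σ1, Matrix.of_apply, dn_fst, dn_snd]
  split_ifs <;>
    first
    | (exfalso; omega)
    | simp_all [dn_inj, dn_add, Prod.fst_add, Prod.snd_add, CharTwo.add_self_eq_zero,
        char2_cancel, Fin.cast_val_eq_self, idx_val,
        mul_add, add_mul, add_assoc, add_comm, add_left_comm, mul_comm, mul_left_comm]
    | (exfalso; simp_all; omega)

lemma grade1_01 (hk1 : 1 ≤ k) (hk2 : k ≤ m) (x : MHF m) (w : T4)
    (hx : ∀ i j, (x i j).1 = (x i j).2) :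
    σ1 m (βHF1 m k x w) = βKh1 m k (σ0 m x) (θ1 w) := by
  apply Matrix.ext
  intro i j
  simp only [σ1, Matrix.of_apply]
  rw [βHF1_apply hk1 hk2, βKh1_apply hk1 hk2]
  simp only [σ0, θ1, Matrix.of_apply, dn_fst, dn_snd]
  split_ifs <;>
    first
    | (exfalso; omega)
    | simp_all [dn_inj, dn_add, Prod.fst_add, Prod.snd_add, CharTwo.add_self_eq_zero,
        char2_cancel, Fin.cast_val_eq_self, idx_val,
        mul_add, add_mul, add_assoc, add_comm, add_left_comm, mul_comm, mul_left_comm]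
    | (exfalso; simp_all; omega)

lemma grade2_00 (hk1 : 1 ≤ k) (hk2 : k ≤ m) (w : T4) (x : MHF m)
    (hx : ∀ i j, (x i j).1 = (x i j).2) (h1 : w.1 = 0) (h4 : w.2.2.2 = 0) :
    σ0 m (βHF2 m k w x) = βKh2 m k w (σ0 m x) := by
  apply Matrix.ext
  intro i j
  simp only [σ0, Matrix.of_apply]
  rw [βHF2_apply hk1 hk2, βKh2_apply hk1 hk2]
  simp only [σ0, Matrix.of_apply, dn_fst, dn_snd]
  split_ifs <;>
    first
    | (exfalso; omega)
    | simp_all [dn_inj, dn_add, Prod.fst_add, Prod.snd_add, CharTwo.add_self_eq_zero,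
        char2_cancel, Fin.cast_val_eq_self, idx_val,
        mul_add, add_mul, add_assoc, add_comm, add_left_comm, mul_comm, mul_left_comm]
    | (exfalso; simp_all; omega)

lemma grade2_01 (hk1 : 1 ≤ k) (hk2 : k ≤ m) (w : T4) (x : MHF m)
    (h1 : w.1 = 0) (h4 : w.2.2.2 = 0) :
    σ1 m (βHF2 m k w x) = βKh2 m k w (σ1 m x) := by
  apply Matrix.ext
  intro i j
  simp only [σ1, Matrix.of_apply]
  rw [βHF2_apply hk1 hk2, βKh2_apply hk1 hk2]
  simp only [σ1, Matrix.of_apply, dn_fst, dn_snd]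
  split_ifs <;>
    first
    | (exfalso; omega)
    | simp_all [dn_inj, dn_add, Prod.fst_add, Prod.snd_add, CharTwo.add_self_eq_zero,
        char2_cancel, Fin.cast_val_eq_self, idx_val,
        mul_add, add_mul, add_assoc, add_comm, add_left_comm, mul_comm, mul_left_comm]
    | (exfalso; simp_all; omega)

lemma grade2_10 (hk1 : 1 ≤ k) (hk2 : k ≤ m) (w : T4) (x : MHF m)
    (hx : ∀ i j, (x i j).1 = (x i j).2) :
    σ1 m (βHF2 m k w x) = βKh2 m k (θ1 w) (σ0 m x) := by
  apply Matrix.ext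
  intro i j
  simp only [σ1, Matrix.of_apply]
  rw [βHF2_apply hk1 hk2, βKh2_apply hk1 hk2]
  simp only [σ0, θ1, Matrix.of_apply, dn_fst, dn_snd]
  split_ifs <;>
    first
    | (exfalso; omega)
    | simp_all [dn_inj, dn_add, Prod.fst_add, Prod.snd_add, CharTwo.add_self_eq_zero,
        char2_cancel, Fin.cast_val_eq_self, idx_val,
        mul_add, add_mul, add_assoc, add_comm, add_left_comm, mul_comm, mul_left_comm]
    | (exfalso; simp_all; omega)

end Helpers

/-- The maps `β₁ = (β_k^{HF})_{(1|1|0)}` and `β₂ = (β_k^{HF})_{(0|1|1)}`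
are filtered: `β₁(ℱ_a ⊗ ℱ_b) ⊆ ℱ_{a+b}` and `β₂(ℱ_a ⊗ ℱ_b) ⊆ ℱ_{a+b}`.
Moreover the induced maps on associated graded pieces coincide with
`(β_k^{Kh})_{(1|1|0)}` and `(β_k^{Kh})_{(0|1|1)}` under the identifications
`gr(B^{HF}_m) ≅ B^{Kh}_m` (`σ0` in degree 0, `σ1 : [ρ_{ij}] ↦ x_{ij}` in degree 1)
and the grading on `P_k^{Kh} ⊗ _kP^{Kh}` placing `v*⊗u` in degree 0, `v*⊗v`, `u*⊗u`
in degree 1 and `u*⊗v` in degree 2 (`θ1` records the degree-1 class). -/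
theorem statement_16 (m k : ℕ) (hm : 1 ≤ m) (hk1 : 1 ≤ k) (hk2 : k ≤ m) :
    -- `β₁` and `β₂` are filtered
    (∀ a b : ℤ, ∀ x ∈ FiltB m a, ∀ w ∈ FiltT b, βHF1 m k x w ∈ FiltB m (a + b)) ∧
    (∀ a b : ℤ, ∀ w ∈ FiltT a, ∀ x ∈ FiltB m b, βHF2 m k w x ∈ FiltB m (a + b)) ∧
    -- induced map on graded pieces in bidegree (0,0)
    (∀ x ∈ FiltB m 0, ∀ w ∈ FiltT 0, σ0 m (βHF1 m k x w) = βKh1 m k (σ0 m x) w) ∧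
    -- bidegree (1,0)
    (∀ x ∈ FiltB m 1, ∀ w ∈ FiltT 0, σ1 m (βHF1 m k x w) = βKh1 m k (σ1 m x) w) ∧
    -- bidegree (0,1)
    (∀ x ∈ FiltB m 0, ∀ w ∈ FiltT 1, σ1 m (βHF1 m k x w) = βKh1 m k (σ0 m x) (θ1 w)) ∧
    -- bidegree (0,0) for β₂
    (∀ w ∈ FiltT 0, ∀ x ∈ FiltB m 0, σ0 m (βHF2 m k w x) = βKh2 m k w (σ0 m x)) ∧
    -- bidegree (0,1) for β₂
    (∀ w ∈ FiltT 0, ∀ x ∈ FiltB m 1, σ1 m (βHF2 m k w x) = βKh2 m k w (σ1 m x)) ∧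
    -- bidegree (1,0) for β₂
    (∀ w ∈ FiltT 1, ∀ x ∈ FiltB m 0, σ1 m (βHF2 m k w x) = βKh2 m k (θ1 w) (σ0 m x)) := by
  have hFB0 : ∀ x : MHF m, x ∈ FiltB m 0 ↔ x ∈ F0HF m := by
    intro x; simp [FiltB]
  have hFT0 : ∀ w : T4, w ∈ FiltT 0 ↔ w.1 = 0 ∧ w.2.1 = 0 ∧ w.2.2.2 = 0 := by
    intro w; simp [FiltT]
  refine ⟨?_, ?_, ?_, ?_, ?_, ?_, ?_, ?_⟩
  · intro a b x hx w hw
    by_cases ha : a < 0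
    · have hx0 : x = 0 := by simpa [FiltB, ha] using hx
      rw [hx0, βHF1_zero_left hk1 hk2]
      exact zero_mem_FiltB m _
    by_cases hb : b < 0
    · have hw0 : w = 0 := by simpa [FiltT, hb] using hw
      rw [hw0, βHF1_zero_right hk1 hk2]
      exact zero_mem_FiltB m _
    by_cases hab : a = 0 ∧ b = 0
    · obtain ⟨rfl, rfl⟩ := hab
      rw [hFB0] at hx
      rw [hFT0] at hw
      have : (0 : ℤ) + 0 = 0 := by norm_num
      rw [this, hFB0]
      exact mem_F0_β1 hk1 hk2 x w hx.2 hw.1 hw.2.2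
    · have hge : ¬ (a + b < 0) ∧ ¬ (a + b = 0) := by omega
      simp only [FiltB, if_neg hge.1, if_neg hge.2]
      exact mem_BHF_β1 hk1 hk2 x w
  · intro a b w hw x hx
    by_cases ha : a < 0
    · have hw0 : w = 0 := by simpa [FiltT, ha] using hw
      rw [hw0, βHF2_zero_left hk1 hk2]
      exact zero_mem_FiltB m _
    by_cases hb : b < 0
    · have hx0 : x = 0 := by simpa [FiltB, hb] using hx
      rw [hx0, βHF2_zero_right hk1 hk2]
      exact zero_mem_FiltB m _
    by_cases hab : a = 0 ∧ b = 0
    · obtain ⟨rfl, rfl⟩ := hab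
      rw [hFB0] at hx
      rw [hFT0] at hw
      have : (0 : ℤ) + 0 = 0 := by norm_num
      rw [this, hFB0]
      exact mem_F0_β2 hk1 hk2 w x hx.2 hw.1 hw.2.2
    · have hge : ¬ (a + b < 0) ∧ ¬ (a + b = 0) := by omega
      simp only [FiltB, if_neg hge.1, if_neg hge.2]
      exact mem_BHF_β2 hk1 hk2 w x
  · intro x hx w hw
    rw [hFB0] at hx; rw [hFT0] at hw
    exact grade1_00 hk1 hk2 x w hx.2 hw.1 hw.2.2
  · intro x hx w hw
    rw [hFT0] at hw
    exact grade1_10 hk1 hk2 x w hw.1 hw.2.2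
  · intro x hx w hw
    rw [hFB0] at hx
    exact grade1_01 hk1 hk2 x w hx.2
  · intro w hw x hx
    rw [hFB0] at hx; rw [hFT0] at hw
    exact grade2_00 hk1 hk2 w x hx.2 hw.1 hw.2.2
  · intro w hw x hx
    rw [hFT0] at hw
    exact grade2_01 hk1 hk2 w x hw.1 hw.2.2
  · intro w hw x hx
    rw [hFB0] at hx
    exact grade2_10 hk1 hk2 w x hx.2


end Stmt16
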